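/- For every n ≥ 1 and every integer k ≥ 0, P(l(n) > k) ≤ n (1−γ)^k. -/

import Mathlib

open MeasureTheory ProbabilityTheory Filter
open scoped ENNReal

noncomputable section

/-- The random walk `S_n = X_1 + ... + X_n` in `ℤ^d`, with `S_0 = 0`. -/
def walk (d : ℕ) {Ω : Type*} (X : ℕ → Ω → (Fin d → ℤ)) (n : ℕ) (ω : Ω) : Fin d → ℤ :=
  ∑ i ∈ Finset.range n, X i ω

/-- The local time `l(n,x) = Σ_{i=0}^n 1{S_i = x}` of the site `x` up to time `n`. -/
def localTime (d : ℕ) {Ω : Type*} (X : ℕ → Ω → (Fin d → ℤ)) (n : ℕ) (x : Fin d → ℤ)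
    (ω : Ω) : ℕ :=
  ∑ i ∈ Finset.range (n + 1), if walk d X i ω = x then 1 else 0

/-- `γ = P(S_n ≠ 0 for all n ≥ 1)`, the probability of no return to the origin. -/
def noReturnProb (d : ℕ) {Ω : Type*} [MeasurableSpace Ω] (μ : Measure Ω)
    (X : ℕ → Ω → (Fin d → ℤ)) : ℝ :=
  (μ {ω | ∀ n : ℕ, 1 ≤ n → walk d X n ω ≠ 0}).toReal

/-- The maximal local time `l(n) = max{l(n,x) : x ∈ ℤ^d}`; the maximum over all of `ℤ^d`
is attained at a visited site `S_i`, `0 ≤ i ≤ n` (elsewhere the local time is `0`). -/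
def maxLocalTime (d : ℕ) {Ω : Type*} (X : ℕ → Ω → (Fin d → ℤ)) (n : ℕ) (ω : Ω) : ℕ :=
  (Finset.range (n + 1)).sup fun i => localTime d X n (walk d X i ω) ω

namespace Stmt12Aux

set_option linter.unusedSectionVars false

variable {G : Type*} [AddCommGroup G] [MeasurableSpace G] [Countable G]
  [MeasurableSingletonClass G]


variable {G : Type*} [AddCommGroup G] [MeasurableSpace G] [Countable G]
  [MeasurableSingletonClass G]

/-- partial sum of the first `m` terms of a sequence. -/
def psum (m : ℕ) (y : ℕ → G) : G := ∑ i ∈ Finset.range m, y i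

/-- shift of a sequence by `s`. -/
def shf (s : ℕ) (y : ℕ → G) : ℕ → G := fun i => y (s + i)

/-- first return at time `s`. -/
def Fset (s : ℕ) : Set (ℕ → G) :=
  {y | 1 ≤ s ∧ psum s y = 0 ∧ ∀ s' ∈ Finset.Ico 1 s, psum s' y ≠ 0}

/-- at least `k` (first-)returns. -/
def MR : ℕ → Set (ℕ → G)
  | 0 => Set.univ
  | (k + 1) => ⋃ s, Fset s ∩ shf s ⁻¹' MR k

/-- at least one return. -/
def Bret : Set (ℕ → G) := ⋃ s, Fset s

lemma measurableSet_discrete {α : Type*} [MeasurableSpace α] [Countable α]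
    [MeasurableSingletonClass α] (s : Set α) : MeasurableSet s :=
  (Set.to_countable s).measurableSet

lemma measurable_psum (m : ℕ) : Measurable (psum (G := G) m) := by
  have h : psum (G := G) m
      = (fun c : Fin m → G => ∑ i, c i) ∘ (fun y (i : Fin m) => y (i : ℕ)) := by
    funext y
    simp [psum, Fin.sum_univ_eq_sum_range, Function.comp]
  rw [h]
  exact (measurable_of_countable _).comp
    (measurable_pi_lambda _ fun i => measurable_pi_apply _)

lemma measurable_shf (s : ℕ) : Measurable (shf (G := G) s) :=
  measurable_pi_lambda _ fun i => measurable_pi_apply _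

lemma measurableSet_Fset (s : ℕ) : MeasurableSet (Fset (G := G) s) := by
  have h : Fset (G := G) s
      = {y | 1 ≤ s} ∩ ((psum s ⁻¹' {0}) ∩ ⋂ s' ∈ Finset.Ico 1 s, (psum s' ⁻¹' {0})ᶜ) := by
    ext y
    simp [Fset, Set.mem_iInter, and_assoc]
  rw [h]
  exact (MeasurableSet.const _).inter
    (((measurable_psum s) (measurableSet_singleton _)).inter
      (MeasurableSet.biInter (Set.to_countable _)
        fun s' _ => ((measurable_psum s') (measurableSet_singleton _)).compl))

lemma measurableSet_MR (k : ℕ) : MeasurableSet (MR (G := G) k) := by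
  induction k with
  | zero => exact MeasurableSet.univ
  | succ k ih =>
      exact MeasurableSet.iUnion fun s =>
        (measurableSet_Fset s).inter (measurable_shf s ih)

lemma measurableSet_Bret : MeasurableSet (Bret (G := G)) :=
  MeasurableSet.iUnion fun s => measurableSet_Fset s

lemma Fset_disjoint_of_lt {a b : ℕ} (hab : a < b) :
    Disjoint (Fset (G := G) a) (Fset (G := G) b) := by
  rw [Set.disjoint_left]
  rintro y ⟨ha1, ha0, -⟩ ⟨-, -, hb⟩
  exact hb a (Finset.mem_Ico.mpr ⟨ha1, hab⟩) ha0

lemma Fset_pairwise_disjoint :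
    Pairwise (Function.onFun Disjoint fun s => Fset (G := G) s) := by
  intro a b hab
  rcases lt_or_gt_of_ne hab with h | h
  · exact Fset_disjoint_of_lt h
  · exact (Fset_disjoint_of_lt h).symm

lemma psum_congr {m : ℕ} {y z : ℕ → G} (h : ∀ i < m, y i = z i) :
    psum m y = psum m z :=
  Finset.sum_congr rfl fun i hi => h i (Finset.mem_range.mp hi)

lemma psum_shf (s m : ℕ) (y : ℕ → G) :
    psum m (shf s y) = psum (s + m) y - psum s y := by
  rw [eq_sub_iff_add_eq, psum, psum, psum, Finset.sum_range_add]
  simp [shf, add_comm]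

lemma mem_Bret_iff {y : ℕ → G} :
    y ∈ Bret ↔ ∃ m, 1 ≤ m ∧ psum m y = 0 := by
  classical
  constructor
  · rintro ⟨_, ⟨s, rfl⟩, h1, h0, -⟩
    exact ⟨s, h1, h0⟩
  · rintro ⟨m, hm1, hm0⟩
    have hP : ∃ j, 1 ≤ j ∧ psum j y = 0 := ⟨m, hm1, hm0⟩
    refine Set.mem_iUnion.mpr ⟨Nat.find hP, (Nat.find_spec hP).1, (Nat.find_spec hP).2, ?_⟩
    intro s' hs'
    rcases Finset.mem_Ico.mp hs' with ⟨h1, h2⟩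
    intro h0
    exact Nat.find_min hP h2 ⟨h1, h0⟩

lemma retsMem : ∀ (k : ℕ) (y : ℕ → G) (R : Finset ℕ),
    (∀ m ∈ R, 1 ≤ m ∧ psum m y = 0) → k ≤ R.card → y ∈ MR (G := G) k := by
  intro k
  induction k with
  | zero => intro y R _ _; exact Set.mem_univ y
  | succ k ih =>
      intro y R hR hcard
      classical
      have hne : R.Nonempty := Finset.card_pos.mp (by omega)
      set m0 := R.min' hne with hm0def
      have hm0 := hR m0 (R.min'_mem hne)
      have hP : ∃ j, 1 ≤ j ∧ psum j y = 0 := ⟨m0, hm0⟩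
      set s := Nat.find hP with hsdef
      have hs := Nat.find_spec hP
      have hss : s ≤ m0 := Nat.find_min' hP hm0
      have hyF : y ∈ Fset (G := G) s := by
        refine ⟨hs.1, hs.2, fun s' hs' h0 => ?_⟩
        rcases Finset.mem_Ico.mp hs' with ⟨h1, h2⟩
        exact Nat.find_min hP h2 ⟨h1, h0⟩
      have hsh : shf s y ∈ MR (G := G) k := by
        refine ih (shf s y) ((R.erase s).image (fun m => m - s)) ?_ ?_
        · rintro m' hm'
          rcases Finset.mem_image.mp hm' with ⟨m, hm, rfl⟩
          have hmR : m ∈ R := Finset.mem_of_mem_erase hm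
          have hmne : m ≠ s := Finset.ne_of_mem_erase hm
          have hms : s < m := lt_of_le_of_ne (hss.trans (R.min'_le m hmR)) (Ne.symm hmne)
          refine ⟨by omega, ?_⟩
          rw [psum_shf]
          have : s + (m - s) = m := by omega
          rw [this, (hR m hmR).2, hs.2, sub_zero]
        · have hinj : Set.InjOn (fun m => m - s) (R.erase s : Set ℕ) := by
            intro a ha b hb hab
            have haR : a ∈ R := Finset.mem_of_mem_erase ha
            have hbR : b ∈ R := Finset.mem_of_mem_erase hb
            have h1 : s < a := lt_of_le_of_ne (hss.trans (R.min'_le a haR))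
              (Ne.symm (Finset.ne_of_mem_erase ha))
            have h2 : s < b := lt_of_le_of_ne (hss.trans (R.min'_le b hbR))
              (Ne.symm (Finset.ne_of_mem_erase hb))
            have h3 : a - s = b - s := hab
            omega
          rw [Finset.card_image_of_injOn hinj]
          have := Finset.pred_card_le_card_erase (s := R) (a := s)
          omega
      have : y ∈ ⋃ t, Fset (G := G) t ∩ shf t ⁻¹' MR (G := G) k :=
        Set.mem_iUnion.mpr ⟨s, hyF, hsh⟩
      exact this


/-- shifted increment incsequence. -/
def incseq {Ω : Type*} (X : ℕ → Ω → G) (t : ℕ) : Ω → ℕ → G := fun ω i => X (t + i) ω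

/-- cylinder sets. -/
def Cyl (m : ℕ) (c : Fin m → G) : Set (ℕ → G) := {y | ∀ i : Fin m, y (i : ℕ) = c i}

/-- the collection of cylinder sets. -/
def cylSets : Set (Set (ℕ → G)) := {A | ∃ (m : ℕ) (c : Fin m → G), A = Cyl m c}

lemma measurableSet_Cyl {m : ℕ} {c : Fin m → G} : MeasurableSet (Cyl m c) := by
  have h : Cyl m c = ⋂ i : Fin m, (fun y : ℕ → G => y (i : ℕ)) ⁻¹' {c i} := by
    ext y; simp [Cyl]
  rw [h]
  exact MeasurableSet.iInter fun i => measurable_pi_apply _ (measurableSet_singleton _)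

lemma Cyl_inter {m m' : ℕ} (hmm : m ≤ m') (c : Fin m → G) (c' : Fin m' → G)
    (hne : (Cyl m c ∩ Cyl m' c').Nonempty) : Cyl m c ∩ Cyl m' c' = Cyl m' c' := by
  obtain ⟨y, hy, hy'⟩ := hne
  refine subset_antisymm Set.inter_subset_right fun z hz => ⟨fun i => ?_, hz⟩
  have h1 : z (i : ℕ) = c' ⟨(i : ℕ), lt_of_lt_of_le i.isLt hmm⟩ :=
    hz ⟨(i : ℕ), lt_of_lt_of_le i.isLt hmm⟩
  have h2 : y (i : ℕ) = c' ⟨(i : ℕ), lt_of_lt_of_le i.isLt hmm⟩ :=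
    hy' ⟨(i : ℕ), lt_of_lt_of_le i.isLt hmm⟩
  rw [h1, ← h2]; exact hy i

lemma isPiSystem_cylSets : IsPiSystem (cylSets (G := G)) := by
  rintro A ⟨m, c, rfl⟩ B ⟨m', c', rfl⟩ hne
  rcases le_total m m' with h | h
  · exact ⟨m', c', Cyl_inter h c c' hne⟩
  · rw [Set.inter_comm] at hne ⊢
    exact ⟨m, c, Cyl_inter h c' c hne⟩

lemma generateFrom_cylSets :
    (inferInstance : MeasurableSpace (ℕ → G)) =
      MeasurableSpace.generateFrom (cylSets (G := G)) := by
  refine le_antisymm ?_ ?_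
  · show MeasurableSpace.pi ≤ _
    rw [MeasurableSpace.pi]
    refine iSup_le fun i => ?_
    rintro t ⟨u, -, rfl⟩
    have hu : (fun y : ℕ → G => y i) ⁻¹' u = ⋃ e ∈ u, (fun y : ℕ → G => y i) ⁻¹' {e} := by
      ext y; simp
    rw [hu]
    refine MeasurableSet.biUnion (Set.to_countable u) fun e _ => ?_
    have he : (fun y : ℕ → G => y i) ⁻¹' {e}
        = ⋃ c : {c : Fin (i + 1) → G // c ⟨i, Nat.lt_succ_self i⟩ = e}, Cyl (i + 1) c := by
      ext y
      constructor
      · intro hy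
        refine Set.mem_iUnion.mpr ⟨⟨fun j => y (j : ℕ), hy⟩, fun j => rfl⟩
      · rintro hy
        obtain ⟨⟨c, hc⟩, hyc⟩ := Set.mem_iUnion.mp hy
        have := hyc ⟨i, Nat.lt_succ_self i⟩
        simp only [Set.mem_preimage, Set.mem_singleton_iff]
        exact this.trans hc
    rw [he]
    exact MeasurableSet.iUnion fun c =>
      MeasurableSpace.measurableSet_generateFrom ⟨i + 1, c, rfl⟩
  · exact MeasurableSpace.generateFrom_le fun A ⟨m, c, hA⟩ => hA ▸ measurableSet_Cyl

variable {Ω : Type*} [MeasurableSpace Ω] {μ : Measure Ω} [IsProbabilityMeasure μ]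
  {X : ℕ → Ω → G}

lemma measurable_incseq (hmeas : ∀ i, Measurable (X i)) (t : ℕ) : Measurable (incseq X t) :=
  measurable_pi_lambda _ fun i => hmeas (t + i)

lemma cyl_measure (hmeas : ∀ i, Measurable (X i))
    (hindep : iIndepFun X μ)
    (hident : ∀ i, μ.map (X i) = μ.map (X 0))
    (t m : ℕ) (c : Fin m → G) :
    μ (incseq X t ⁻¹' Cyl m c) = ∏ i : Fin m, (μ.map (X 0)) {c i} := by
  classical
  set sets : ℕ → Set G := fun j => {e | ∀ i : Fin m, j = t + (i : ℕ) → e = c i} with hsets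
  have hInter : incseq X t ⁻¹' Cyl m c = ⋂ j ∈ Finset.Ico t (t + m), X j ⁻¹' sets j := by
    ext ω
    simp only [Set.mem_preimage, Cyl, Set.mem_setOf_eq, Set.mem_iInter, hsets, incseq]
    constructor
    · rintro h j hj i rfl
      exact h i
    · intro h i
      exact h (t + (i : ℕ)) (Finset.mem_Ico.mpr ⟨Nat.le_add_right _ _, by omega⟩) i rfl
  rw [hInter, hindep.measure_inter_preimage_eq_mul _
    (fun j _ => (Set.to_countable _).measurableSet)]
  have hIcoProd : ∏ j ∈ Finset.Ico t (t + m), μ (X j ⁻¹' sets j)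
      = ∏ i ∈ Finset.range m, μ (X (t + i) ⁻¹' sets (t + i)) := by
    rw [Finset.prod_Ico_eq_prod_range]
    simp
  rw [hIcoProd, ← Fin.prod_univ_eq_prod_range (fun i => μ (X (t + i) ⁻¹' sets (t + i))) m]
  refine Finset.prod_congr rfl fun i _ => ?_
  have hset : sets (t + (i : ℕ)) = {c i} := by
    ext e
    simp only [hsets, Set.mem_setOf_eq, Set.mem_singleton_iff]
    constructor
    · intro h; exact h i rfl
    · intro h i' hi'
      have : i' = i := Fin.ext (by omega)
      rw [← this] at h; exact h
  rw [hset, ← Measure.map_apply (hmeas _) (measurableSet_singleton _), hident (t + i)]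

lemma map_incseq_eq (hmeas : ∀ i, Measurable (X i))
    (hindep : iIndepFun X μ)
    (hident : ∀ i, μ.map (X i) = μ.map (X 0)) (t : ℕ) :
    μ.map (incseq X t) = μ.map (incseq X 0) := by
  haveI h1 : IsProbabilityMeasure (μ.map (incseq X t)) :=
    Measure.isProbabilityMeasure_map (measurable_incseq hmeas t).aemeasurable
  haveI h2 : IsProbabilityMeasure (μ.map (incseq X 0)) :=
    Measure.isProbabilityMeasure_map (measurable_incseq hmeas 0).aemeasurable
  refine ext_of_generate_finite _ generateFrom_cylSets isPiSystem_cylSets ?_ (by simp)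
  rintro A ⟨m, c, rfl⟩
  rw [Measure.map_apply (measurable_incseq hmeas t) measurableSet_Cyl,
    Measure.map_apply (measurable_incseq hmeas 0) measurableSet_Cyl,
    cyl_measure hmeas hindep hident t m c, cyl_measure hmeas hindep hident 0 m c]


/-- A set determined by the coordinates `< s` is measurable w.r.t. the σ-algebra generated
by those coordinates. -/
lemma measurableSet_head (s : ℕ) (A : Set (ℕ → G))
    (hA : ∀ y z : ℕ → G, (∀ i, i < s → y i = z i) → y ∈ A → z ∈ A) :
    MeasurableSet[⨆ i ∈ {i : ℕ | i < s},
      MeasurableSpace.comap (fun y : ℕ → G => y i) inferInstance] A := by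
  have hr : Measurable[⨆ i ∈ {i : ℕ | i < s},
      MeasurableSpace.comap (fun y : ℕ → G => y i) inferInstance]
      (fun y : ℕ → G => (fun i : Fin s => y (i : ℕ))) := by
    refine @measurable_pi_lambda _ _ _
      (⨆ i ∈ {i : ℕ | i < s},
        MeasurableSpace.comap (fun y : ℕ → G => y i) inferInstance)
      (fun _ => inferInstance) _ fun i => ?_
    have hle : MeasurableSpace.comap (fun y : ℕ → G => y (i : ℕ)) inferInstance ≤
        ⨆ i ∈ {i : ℕ | i < s},
          MeasurableSpace.comap (fun y : ℕ → G => y i) inferInstance :=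
      le_biSup (fun j : ℕ => MeasurableSpace.comap (fun y : ℕ → G => y j) inferInstance)
        (show (i : ℕ) ∈ {i : ℕ | i < s} from i.isLt)
    exact (measurable_iff_comap_le.mpr le_rfl).mono hle le_rfl
  have hAeq : A = (fun y : ℕ → G => (fun i : Fin s => y (i : ℕ))) ⁻¹'
      ((fun y : ℕ → G => (fun i : Fin s => y (i : ℕ))) '' A) := by
    refine subset_antisymm (Set.subset_preimage_image _ _) ?_
    rintro y ⟨z, hz, hzy⟩
    refine hA z y (fun i hi => ?_) hz
    exact congrFun hzy ⟨i, hi⟩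
  rw [hAeq]
  exact hr ((Set.to_countable _).measurableSet)

lemma measurable_shf_tail (s : ℕ) :
    Measurable[⨆ i ∈ {i : ℕ | i < s}ᶜ,
      MeasurableSpace.comap (fun y : ℕ → G => y i) inferInstance] (shf (G := G) s) := by
  refine @measurable_pi_lambda _ _ _
    (⨆ i ∈ {i : ℕ | i < s}ᶜ,
      MeasurableSpace.comap (fun y : ℕ → G => y i) inferInstance)
    (fun _ => inferInstance) _ fun i => ?_
  have hle : MeasurableSpace.comap (fun y : ℕ → G => y (s + i)) inferInstance ≤
      ⨆ i ∈ {i : ℕ | i < s}ᶜ,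
        MeasurableSpace.comap (fun y : ℕ → G => y i) inferInstance :=
    le_biSup (fun j : ℕ => MeasurableSpace.comap (fun y : ℕ → G => y j) inferInstance)
      (show (s + i) ∈ {i : ℕ | i < s}ᶜ by simp)
  exact (measurable_iff_comap_le.mpr le_rfl).mono hle le_rfl

lemma Fset_head (s : ℕ) (y z : ℕ → G) (h : ∀ i, i < s → y i = z i) :
    y ∈ Fset (G := G) s → z ∈ Fset (G := G) s := by
  rintro ⟨h1, h0, hmin⟩
  refine ⟨h1, ?_, fun s' hs' => ?_⟩
  · rw [← h0]; exact (psum_congr fun i hi => (h i hi).symm)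
  · rcases Finset.mem_Ico.mp hs' with ⟨hs'1, hs'2⟩
    rw [← psum_congr fun i hi => h i (by omega)]
    exact hmin s' hs'

lemma MR_measure (ν : Measure (ℕ → G)) [IsProbabilityMeasure ν]
    (hind : iIndep (fun i : ℕ =>
      MeasurableSpace.comap (fun y : ℕ → G => y i) inferInstance) ν)
    (hshift : ∀ s, ν.map (shf s) = ν) (k : ℕ) :
    ν (MR k) = (ν (Bret (G := G))) ^ k := by
  induction k with
  | zero => simp [MR]
  | succ k ih =>
      have hle : ∀ i : ℕ,
          MeasurableSpace.comap (fun y : ℕ → G => y i) inferInstance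
            ≤ (inferInstance : MeasurableSpace (ℕ → G)) :=
        fun i => measurable_iff_comap_le.mp (measurable_pi_apply i)
      have hMR : MR (G := G) (k + 1) = ⋃ s, Fset s ∩ shf s ⁻¹' MR k := rfl
      have hsets : ∀ s : ℕ, MeasurableSet (Fset (G := G) s ∩ shf s ⁻¹' MR k) :=
        fun s => (measurableSet_Fset s).inter (measurable_shf s (measurableSet_MR k))
      have hdisj : Pairwise (Function.onFun Disjoint
          fun s => Fset (G := G) s ∩ shf s ⁻¹' MR k) :=
        fun a b hab => (Fset_pairwise_disjoint hab).mono
          Set.inter_subset_left Set.inter_subset_left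
      rw [hMR, measure_iUnion hdisj hsets]
      have hterm : ∀ s : ℕ, ν (Fset (G := G) s ∩ shf s ⁻¹' MR k)
          = ν (Fset (G := G) s) * ν (MR (G := G) k) := by
        intro s
        have hindep2 := indep_biSup_compl hle hind {i : ℕ | i < s}
        have h1 : MeasurableSet[⨆ i ∈ {i : ℕ | i < s},
            MeasurableSpace.comap (fun y : ℕ → G => y i) inferInstance]
            (Fset (G := G) s) :=
          measurableSet_head s _ (fun y z h => Fset_head s y z h)
        have h2 : MeasurableSet[⨆ i ∈ {i : ℕ | i < s}ᶜ,
            MeasurableSpace.comap (fun y : ℕ → G => y i) inferInstance]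
            (shf (G := G) s ⁻¹' MR k) :=
          measurable_shf_tail s (measurableSet_MR k)
        have hmul := ((Indep_iff _ _ _).mp hindep2) _ _ h1 h2
        rw [hmul]
        congr 1
        rw [← Measure.map_apply (measurable_shf s) (measurableSet_MR k), hshift s]
      calc ∑' s, ν (Fset (G := G) s ∩ shf s ⁻¹' MR k)
          = ∑' s, ν (Fset (G := G) s) * ν (MR (G := G) k) := by
            exact tsum_congr hterm
        _ = (∑' s, ν (Fset (G := G) s)) * ν (MR (G := G) k) := ENNReal.tsum_mul_right
        _ = ν (Bret (G := G)) * ν (MR (G := G) k) := by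
            rw [Bret, measure_iUnion Fset_pairwise_disjoint measurableSet_Fset]
        _ = ν (Bret (G := G)) ^ (k + 1) := by rw [ih, pow_succ, mul_comm]


lemma coord_indep (hmeas : ∀ i, Measurable (X i))
    (hindep : iIndepFun X μ) :
    iIndepFun
      (fun (i : ℕ) (y : ℕ → G) => y i) (μ.map (incseq X 0)) := by
  refine (iIndepFun_iff_measure_inter_preimage_eq_mul).mpr fun S sets hsets => ?_
  have hS : MeasurableSet (⋂ i ∈ S, (fun y : ℕ → G => y i) ⁻¹' sets i) :=
    MeasurableSet.biInter (Finset.countable_toSet S)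
      fun i _ => measurable_pi_apply i (Set.to_countable _).measurableSet
  rw [Measure.map_apply (measurable_incseq hmeas 0) hS]
  have hpre : incseq X 0 ⁻¹' (⋂ i ∈ S, (fun y : ℕ → G => y i) ⁻¹' sets i)
      = ⋂ i ∈ S, X i ⁻¹' sets i := by
    ext ω; simp [incseq]
  rw [hpre, hindep.measure_inter_preimage_eq_mul S hsets]
  refine Finset.prod_congr rfl fun i _ => ?_
  rw [Measure.map_apply (measurable_incseq hmeas 0)
    (measurable_pi_apply i (hsets i ‹_›))]
  congr 1
  ext ω; simp [incseq]


end Stmt12Aux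

open Stmt12Aux

/-- For `n ≥ 1` and any integer `k ≥ 0`: `P(l(n) > k) ≤ n (1-γ)^k`. -/
theorem stmt12
    {Ω : Type*} [MeasurableSpace Ω] (μ : Measure Ω) [IsProbabilityMeasure μ]
    (d : ℕ) (hd : 1 ≤ d)
    (X : ℕ → Ω → (Fin d → ℤ))
    (hmeas : ∀ i, Measurable (X i))
    (hindep : iIndepFun X μ)
    (hident : ∀ i, μ.map (X i) = μ.map (X 0))
    (hγ0 : 0 < noReturnProb d μ X) (hγ1 : noReturnProb d μ X < 1)
    (n : ℕ) (hn : 1 ≤ n) (k : ℕ) :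
    (μ {ω | k < maxLocalTime d X n ω}).toReal ≤
      (n : ℝ) * (1 - noReturnProb d μ X) ^ k := by
  classical
  rcases Nat.eq_zero_or_pos k with rfl | hk
  · have h1 : (μ {ω | 0 < maxLocalTime d X n ω}).toReal ≤ 1 := by
      have h := prob_le_one (μ := μ) (s := {ω | 0 < maxLocalTime d X n ω})
      simpa using ENNReal.toReal_mono ENNReal.one_ne_top h
    have h2 : (1 : ℝ) ≤ (n : ℝ) := by exact_mod_cast hn
    calc (μ {ω | 0 < maxLocalTime d X n ω}).toReal ≤ 1 := h1
      _ ≤ (n : ℝ) := h2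
      _ = (n : ℝ) * (1 - noReturnProb d μ X) ^ 0 := by ring
  · -- main case
    set Gset : Set Ω := {ω | ∀ m : ℕ, 1 ≤ m → walk d X m ω ≠ 0} with hGset
    have hwalkmeas : ∀ m, Measurable (walk d X m) := by
      intro m
      have h : walk d X m = (fun c : Fin m → (Fin d → ℤ) => ∑ i, c i)
          ∘ (fun ω (i : Fin m) => X (i : ℕ) ω) := by
        funext ω
        exact (Fin.sum_univ_eq_sum_range (fun i => X i ω) m).symm
      rw [h]
      exact (measurable_of_countable _).comp
        (measurable_pi_lambda _ fun i => hmeas (i : ℕ))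
    have hGmeas : MeasurableSet Gset := by
      have h : Gset = ⋂ m : ℕ, ⋂ (_ : 1 ≤ m), ((walk d X m) ⁻¹' {0})ᶜ := by
        ext ω; simp [hGset]
      rw [h]
      exact MeasurableSet.iInter fun m => MeasurableSet.iInter fun _ =>
        ((hwalkmeas m) (measurableSet_singleton 0)).compl
    set ν : Measure (ℕ → (Fin d → ℤ)) := μ.map (incseq X 0) with hν
    haveI : IsProbabilityMeasure ν :=
      Measure.isProbabilityMeasure_map (measurable_incseq hmeas 0).aemeasurable
    have hshift : ∀ s, ν.map (shf s) = ν := by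
      intro s
      rw [hν, Measure.map_map (measurable_shf s) (measurable_incseq hmeas 0)]
      have h : shf s ∘ incseq X 0 = incseq X s := by
        funext ω i
        simp [shf, incseq, Function.comp]
      rw [h, map_incseq_eq hmeas hindep hident s]
    have hind : iIndep (fun i : ℕ =>
        MeasurableSpace.comap (fun y : ℕ → (Fin d → ℤ) => y i) inferInstance) ν :=
      coord_indep hmeas hindep
    have hMRν : ν (MR k) = (ν Bret) ^ k := MR_measure ν hind hshift k
    have hps : ∀ (m : ℕ) (ω : Ω), psum m (incseq X 0 ω) = walk d X m ω := by
      intro m ω; simp [psum, incseq, walk]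
    have hq : ν Bret = 1 - μ Gset := by
      rw [hν, Measure.map_apply (measurable_incseq hmeas 0) measurableSet_Bret]
      have hpre : incseq X 0 ⁻¹' Bret = Gsetᶜ := by
        ext ω
        simp only [Set.mem_preimage, mem_Bret_iff, Set.mem_compl_iff, hGset,
          Set.mem_setOf_eq, hps]
        push_neg
        rfl
      rw [hpre, prob_compl_eq_one_sub hGmeas]
    -- inclusion
    have hsub : {ω | k < maxLocalTime d X n ω} ⊆
        ⋃ t ∈ Finset.range n, incseq X t ⁻¹' MR (G := Fin d → ℤ) k := by
      intro ω hω
      have hω' : k < (Finset.range (n + 1)).sup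
          (fun i => localTime d X n (walk d X i ω) ω) := hω
      obtain ⟨i, hi, hlt⟩ := Finset.lt_sup_iff.mp hω'
      set x := walk d X i ω with hx
      set T := (Finset.range (n + 1)).filter (fun j => walk d X j ω = x) with hT
      have hcardT : localTime d X n x ω = T.card := by
        have := Finset.sum_boole (p := fun j => walk d X j ω = x)
          (s := Finset.range (n + 1)) (R := ℕ)
        simpa [localTime, hT] using this.symm
      have hTcard : k + 1 ≤ T.card := by omega
      have hTne : T.Nonempty := Finset.card_pos.mp (by omega)
      set t0 := T.min' hTne with ht0def
      have ht0T : t0 ∈ T := T.min'_mem hTne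
      have ht0x : walk d X t0 ω = x := (Finset.mem_filter.mp ht0T).2
      have ht0n : t0 < n := by
        obtain ⟨t1, ht1, hne⟩ := Finset.exists_mem_ne (s := T) (by omega) t0
        have h1 : t1 < n + 1 := Finset.mem_range.mp (Finset.mem_filter.mp ht1).1
        have h2 : t0 ≤ t1 := T.min'_le t1 ht1
        omega
      have hmem : incseq X t0 ω ∈ MR (G := Fin d → ℤ) k := by
        refine retsMem k _ ((T.erase t0).image (fun t => t - t0)) ?_ ?_
        · rintro m hm
          rcases Finset.mem_image.mp hm with ⟨t, ht, rfl⟩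
          have htT := Finset.mem_of_mem_erase ht
          have htx : walk d X t ω = x := (Finset.mem_filter.mp htT).2
          have h2 : t0 < t := lt_of_le_of_ne (T.min'_le t htT)
            (Ne.symm (Finset.ne_of_mem_erase ht))
          refine ⟨by omega, ?_⟩
          have hsum : psum (t - t0) (incseq X t0 ω) = ∑ j ∈ Finset.Ico t0 t, X j ω := by
            rw [Finset.sum_Ico_eq_sum_range]
            simp [psum, incseq]
          rw [hsum, Finset.sum_Ico_eq_sub _ (le_of_lt h2)]
          show walk d X t ω - walk d X t0 ω = 0
          rw [htx, ht0x, sub_self]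
        · have hinj : Set.InjOn (fun t => t - t0) ((T.erase t0) : Set ℕ) := by
            intro a ha b hb hab
            have h1 : t0 < a := lt_of_le_of_ne (T.min'_le a (Finset.mem_of_mem_erase ha))
              (Ne.symm (Finset.ne_of_mem_erase ha))
            have h2 : t0 < b := lt_of_le_of_ne (T.min'_le b (Finset.mem_of_mem_erase hb))
              (Ne.symm (Finset.ne_of_mem_erase hb))
            have h3 : a - t0 = b - t0 := hab
            omega
          rw [Finset.card_image_of_injOn hinj]
          have := Finset.pred_card_le_card_erase (s := T) (a := t0)
          omega
      exact Set.mem_iUnion₂.mpr ⟨t0, Finset.mem_range.mpr ht0n, hmem⟩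
    have hterm : ∀ t, μ (incseq X t ⁻¹' MR (G := Fin d → ℤ) k) = ν (MR k) := by
      intro t
      rw [hν, ← map_incseq_eq hmeas hindep hident t,
        Measure.map_apply (measurable_incseq hmeas t) (measurableSet_MR k)]
    have hb2 : μ {ω | k < maxLocalTime d X n ω} ≤ (n : ℝ≥0∞) * (ν Bret) ^ k := by
      calc μ {ω | k < maxLocalTime d X n ω}
          ≤ μ (⋃ t ∈ Finset.range n, incseq X t ⁻¹' MR (G := Fin d → ℤ) k) :=
            measure_mono hsub
        _ ≤ ∑ t ∈ Finset.range n, μ (incseq X t ⁻¹' MR (G := Fin d → ℤ) k) :=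
            measure_biUnion_finset_le _ _
        _ = ∑ _t ∈ Finset.range n, ν (MR k) := Finset.sum_congr rfl fun t _ => hterm t
        _ = (n : ℝ≥0∞) * ν (MR k) := by
            rw [Finset.sum_const, Finset.card_range, nsmul_eq_mul]
        _ = (n : ℝ≥0∞) * (ν Bret) ^ k := by rw [hMRν]
    have hq1 : ν Bret ≤ 1 := prob_le_one
    have hfin : (n : ℝ≥0∞) * (ν Bret) ^ k ≠ ⊤ :=
      ENNReal.mul_ne_top (ENNReal.natCast_ne_top n)
        (ENNReal.pow_ne_top (lt_of_le_of_lt hq1 ENNReal.one_lt_top).ne)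
    have hmono := ENNReal.toReal_mono hfin hb2
    refine hmono.trans (le_of_eq ?_)
    rw [ENNReal.toReal_mul, ENNReal.toReal_pow, ENNReal.toReal_natCast]
    congr 2
    rw [hq, ENNReal.toReal_sub_of_le prob_le_one ENNReal.one_ne_top]
    simp [noReturnProb, hGset]

end
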